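/- Suppose k ≥ 2, k < m < 2k, and ℓ > 1. Every fault-free tiling of an m×(kℓ) rectangle by k×1 tiles contains exactly k vertical tiles. -/
import Mathlib


/-- The cells of an `m × n` rectangle: `(row, column)` with `row < m`, `column < n`. -/
def grid (m n : ℕ) : Finset (ℕ × ℕ) := Finset.range m ×ˢ Finset.range n

/-- A horizontal `k × 1` tile: `k` consecutive cells in one row. -/
def IsHTile (k : ℕ) (t : Finset (ℕ × ℕ)) : Prop :=
  ∃ i j : ℕ, t = (Finset.range k).image fun s => (i, j + s)

/-- A vertical `k × 1` tile: `k` consecutive cells in one column. -/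
def IsVTile (k : ℕ) (t : Finset (ℕ × ℕ)) : Prop :=
  ∃ i j : ℕ, t = (Finset.range k).image fun s => (i + s, j)

/-- A tiling of the `m × n` rectangle by `k × 1` tiles. -/
def IsTiling (m n k : ℕ) (T : Finset (Finset (ℕ × ℕ))) : Prop :=
  (∀ t ∈ T, IsHTile k t ∨ IsVTile k t) ∧
  (T : Set (Finset (ℕ × ℕ))).PairwiseDisjoint id ∧
  T.biUnion id = grid m n

/-- The number of tilings of the `m × n` rectangle by `k × 1` tiles. -/
noncomputable def numTilings (m n k : ℕ) : ℕ :=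
  Nat.card {T : Finset (Finset (ℕ × ℕ)) // IsTiling m n k T}

/-- The tiling `T` has a fault at `x = a`: every tile lies entirely in
columns `< a` or entirely in columns `≥ a`. -/
def HasFaultAt (T : Finset (Finset (ℕ × ℕ))) (a : ℕ) : Prop :=
  ∀ t ∈ T, (∀ c ∈ t, c.2 < a) ∨ (∀ c ∈ t, a ≤ c.2)

/-- A tiling of a rectangle with `n` columns is fault-free. -/
def FaultFree (n : ℕ) (T : Finset (Finset (ℕ × ℕ))) : Prop :=
  ∀ a : ℕ, 0 < a → a < n → ¬ HasFaultAt T a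

/-- The number of fault-free tilings of the `m × n` rectangle by `k × 1` tiles. -/
noncomputable def numFFTilings (m n k : ℕ) : ℕ :=
  Nat.card {T : Finset (Finset (ℕ × ℕ)) // IsTiling m n k T ∧ FaultFree n T}

namespace FF
open Finset

open Classical in
noncomputable def vcnt (k : ℕ) (T : Finset (Finset (ℕ × ℕ))) (r a : ℕ) : ℕ :=
  (T.filter (fun t => IsVTile k t ∧ ∃ j < a, (r, j) ∈ t)).card

open Classical in
noncomputable def vall (k : ℕ) (T : Finset (Finset (ℕ × ℕ))) (a : ℕ) : ℕ :=
  (T.filter (fun t => IsVTile k t ∧ ∃ c ∈ t, c.2 < a)).card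

lemma mem_vtile {k i j : ℕ} {c : ℕ × ℕ} :
    c ∈ (Finset.range k).image (fun s => (i + s, j)) ↔ ∃ s < k, c = (i + s, j) := by
  simp [Finset.mem_image, Finset.mem_range, eq_comm]

lemma mem_htile {k i j : ℕ} {c : ℕ × ℕ} :
    c ∈ (Finset.range k).image (fun s => (i, j + s)) ↔ ∃ s < k, c = (i, j + s) := by
  simp [Finset.mem_image, Finset.mem_range, eq_comm]

lemma tile_subset_grid {m n k : ℕ} {T : Finset (Finset (ℕ × ℕ))} (hT : IsTiling m n k T)
    {t : Finset (ℕ × ℕ)} (ht : t ∈ T) : t ⊆ grid m n := fun c hc =>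
  hT.2.2 ▸ Finset.mem_biUnion.mpr ⟨t, ht, by simpa using hc⟩

lemma mem_grid {m n : ℕ} {c : ℕ × ℕ} : c ∈ grid m n ↔ c.1 < m ∧ c.2 < n := by
  simp [grid, Finset.mem_product]

/-- cells of a vertical tile in row `r` left of `a`. -/
lemma vcard (k i j r a : ℕ) :
    (((Finset.range k).image fun s => (i + s, j)).filter (fun c => c.1 = r ∧ c.2 < a)).card
      = if i ≤ r ∧ r < i + k ∧ j < a then 1 else 0 := by
  have hinj : Function.Injective (fun s => ((i + s, j) : ℕ × ℕ)) := by
    intro x y hxy; simpa using hxy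
  rw [Finset.filter_image, Finset.card_image_of_injective _ hinj]
  split_ifs with h
  · have : (Finset.range k).filter (fun s => (i + s, j).1 = r ∧ (i + s, j).2 < a) = {r - i} := by
      ext x; simp only [Finset.mem_filter, Finset.mem_range, Finset.mem_singleton]; omega
    rw [this]; simp
  · have : (Finset.range k).filter (fun s => (i + s, j).1 = r ∧ (i + s, j).2 < a) = ∅ := by
      ext x; simp only [Finset.mem_filter, Finset.mem_range, Finset.notMem_empty, iff_false]
      omega
    rw [this]; simp

/-- cells of a horizontal tile in row `r` left of `a`. -/
lemma hcard (k i j r a : ℕ) :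
    (((Finset.range k).image fun s => (i, j + s)).filter (fun c => c.1 = r ∧ c.2 < a)).card
      = if i = r then min k (a - j) else 0 := by
  have hinj : Function.Injective (fun s => ((i, j + s) : ℕ × ℕ)) := by
    intro x y hxy; simpa using hxy
  rw [Finset.filter_image, Finset.card_image_of_injective _ hinj]
  split_ifs with h
  · have : (Finset.range k).filter (fun s => (i, j + s).1 = r ∧ (i, j + s).2 < a)
        = Finset.range (min k (a - j)) := by
      ext x; simp only [Finset.mem_filter, Finset.mem_range, lt_min_iff]; omega
    rw [this, Finset.card_range]
  · have : (Finset.range k).filter (fun s => (i, j + s).1 = r ∧ (i, j + s).2 < a) = ∅ := by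
      ext x; simp only [Finset.mem_filter, Finset.mem_range, Finset.notMem_empty, iff_false]
      omega
    rw [this]; simp

/-- the basic counting identity for a row slice. -/
lemma sum_cards {m n k : ℕ} {T : Finset (Finset (ℕ × ℕ))} (hT : IsTiling m n k T)
    {r a : ℕ} (hr : r < m) (ha : a ≤ n) :
    ∑ t ∈ T, ((t.filter (fun c => c.1 = r ∧ c.2 < a)).card) = a := by
  classical
  have hdisj : ∀ x ∈ T, ∀ y ∈ T, x ≠ y →
      Disjoint (x.filter (fun c => c.1 = r ∧ c.2 < a)) (y.filter (fun c => c.1 = r ∧ c.2 < a)) := by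
    intro x hx y hy hxy
    exact Finset.disjoint_filter_filter (hT.2.1 hx hy hxy)
  rw [← Finset.card_biUnion hdisj]
  have h1 : T.biUnion (fun t => t.filter (fun c => c.1 = r ∧ c.2 < a))
      = (T.biUnion id).filter (fun c => c.1 = r ∧ c.2 < a) := by
    ext c; simp [Finset.mem_biUnion, Finset.mem_filter]; tauto
  rw [h1, hT.2.2]
  have h2 : (grid m n).filter (fun c => c.1 = r ∧ c.2 < a) = {r} ×ˢ Finset.range a := by
    ext ⟨x, y⟩
    simp only [Finset.mem_filter, mem_grid, Finset.mem_product, Finset.mem_singleton,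
      Finset.mem_range]
    omega
  rw [h2]; simp


/-- a horizontal tile cannot be a vertical tile (k ≥ 2). -/
lemma not_vtile_of_cross {k : ℕ} (hk : 2 ≤ k) {t : Finset (ℕ × ℕ)} {r a : ℕ}
    (h1 : (r, a - 1) ∈ t) (h2 : (r, a) ∈ t) (ha : 1 ≤ a) : ¬ IsVTile k t := by
  rintro ⟨i, j, rfl⟩
  rw [mem_vtile] at h1 h2
  obtain ⟨s1, -, hs1⟩ := h1
  obtain ⟨s2, -, hs2⟩ := h2
  have e1 : a - 1 = j := congrArg Prod.snd hs1
  have e2 : a = j := congrArg Prod.snd hs2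
  omega

/-- sum over vertical tiles equals the vertical count. -/
lemma vert_sum {m n k : ℕ} {T : Finset (Finset (ℕ × ℕ))} (hT : IsTiling m n k T) (r a : ℕ) :
    ∀ t ∈ T, IsVTile k t →
      ((t.filter (fun c => c.1 = r ∧ c.2 < a)).card)
        = if (∃ j < a, (r, j) ∈ t) then 1 else 0 := by
  intro t ht hv
  obtain ⟨i, j, rfl⟩ := hv
  rw [vcard]
  congr 1
  simp only [eq_iff_iff]
  constructor
  · rintro ⟨hir, hri, hja⟩
    exact ⟨j, hja, mem_vtile.mpr ⟨r - i, by omega, by simp; omega⟩⟩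
  · rintro ⟨j', hj', hmem⟩
    rw [mem_vtile] at hmem
    obtain ⟨s, hs, hc⟩ := hmem
    have := congrArg Prod.fst hc
    have := congrArg Prod.snd hc
    simp at *
    omega

/-- master congruence: if no tile of `T` crosses the line `a` within row `r`,
then `vcnt k T r a ≡ a [MOD k]`. -/
lemma cong {m n k : ℕ} (hk : 2 ≤ k) {T : Finset (Finset (ℕ × ℕ))} (hT : IsTiling m n k T)
    {r a : ℕ} (hr : r < m) (ha : a ≤ n)
    (hcross : ∀ t ∈ T, ¬((r, a - 1) ∈ t ∧ (r, a) ∈ t)) :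
    ((vcnt k T r a : ZMod k)) = (a : ZMod k) := by
  classical
  have hsum := sum_cards hT hr ha
  have hsplit := Finset.sum_filter_add_sum_filter_not T (fun t => IsVTile k t)
    (fun t => (t.filter (fun c => c.1 = r ∧ c.2 < a)).card)
  rw [hsum] at hsplit
  -- vertical part
  have hv : ∑ t ∈ T.filter (fun t => IsVTile k t),
      ((t.filter (fun c => c.1 = r ∧ c.2 < a)).card) = vcnt k T r a := by
    rw [vcnt, ← Finset.filter_filter, Finset.card_filter]
    refine Finset.sum_congr rfl ?_
    intro t ht
    rw [Finset.mem_filter] at ht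
    exact vert_sum hT r a t ht.1 ht.2
  -- horizontal part: each term is divisible by k
  have hh : ∀ t ∈ T.filter (fun t => ¬ IsVTile k t),
      (((t.filter (fun c => c.1 = r ∧ c.2 < a)).card : ZMod k)) = 0 := by
    intro t ht
    rw [Finset.mem_filter] at ht
    obtain ⟨i, j, rfl⟩ := (hT.1 t ht.1).resolve_right ht.2
    rw [hcard]
    split_ifs with hir
    · rcases le_or_gt a j with hja | hja
      · have : min k (a - j) = 0 := by omega
        rw [this]; simp
      · rcases le_or_gt (j + k) a with hjk | hjk
        · have : min k (a - j) = k := by omega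
          rw [this]; simp
        · -- crossing: contradiction
          exfalso
          refine hcross _ ht.1 ⟨?_, ?_⟩
          · exact mem_htile.mpr ⟨a - 1 - j, by omega, by subst hir; simp; omega⟩
          · exact mem_htile.mpr ⟨a - j, by omega, by subst hir; simp; omega⟩
    · simp
  calc ((vcnt k T r a : ℕ) : ZMod k)
      = ((∑ t ∈ T.filter (fun t => IsVTile k t),
            ((t.filter (fun c => c.1 = r ∧ c.2 < a)).card) : ℕ) : ZMod k) := by rw [hv]
    _ = ((∑ t ∈ T.filter (fun t => IsVTile k t),
            ((t.filter (fun c => c.1 = r ∧ c.2 < a)).card) : ℕ) : ZMod k)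
        + ∑ t ∈ T.filter (fun t => ¬ IsVTile k t),
            (((t.filter (fun c => c.1 = r ∧ c.2 < a)).card : ZMod k)) := by
        rw [Finset.sum_eq_zero hh, add_zero]
    _ = (((∑ t ∈ T.filter (fun t => IsVTile k t),
            ((t.filter (fun c => c.1 = r ∧ c.2 < a)).card))
        + ∑ t ∈ T.filter (fun t => ¬ IsVTile k t),
            ((t.filter (fun c => c.1 = r ∧ c.2 < a)).card) : ℕ) : ZMod k) := by
        push_cast; ring
    _ = (a : ZMod k) := by rw [hsplit]


/-- congruence with a crossing horizontal tile in row `r`. -/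
lemma congX {m n k : ℕ} (hk : 2 ≤ k) {T : Finset (Finset (ℕ × ℕ))} (hT : IsTiling m n k T)
    {r a j : ℕ} (hr : r < m) (ha : a ≤ n) {t₀ : Finset (ℕ × ℕ)} (ht₀T : t₀ ∈ T)
    (ht₀ : t₀ = (Finset.range k).image fun s => (r, j + s))
    (hja : j < a) (haj : a < j + k) :
    ((vcnt k T r a : ZMod k)) + ((a - j : ℕ) : ZMod k) = (a : ZMod k) := by
  classical
  have hmem1 : (r, a - 1) ∈ t₀ := ht₀ ▸ mem_htile.mpr ⟨a - 1 - j, by omega, by simp; omega⟩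
  have hmem2 : (r, a) ∈ t₀ := ht₀ ▸ mem_htile.mpr ⟨a - j, by omega, by simp; omega⟩
  have hnv : ¬ IsVTile k t₀ := not_vtile_of_cross hk hmem1 hmem2 (by omega)
  have hsum := sum_cards hT hr ha
  have hsplit := Finset.sum_filter_add_sum_filter_not T (fun t => IsVTile k t)
    (fun t => (t.filter (fun c => c.1 = r ∧ c.2 < a)).card)
  rw [hsum] at hsplit
  have hv : ∑ t ∈ T.filter (fun t => IsVTile k t),
      ((t.filter (fun c => c.1 = r ∧ c.2 < a)).card) = vcnt k T r a := by
    rw [vcnt, ← Finset.filter_filter, Finset.card_filter]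
    refine Finset.sum_congr rfl ?_
    intro t ht
    rw [Finset.mem_filter] at ht
    exact vert_sum hT r a t ht.1 ht.2
  -- horizontal part equals (a - j) mod k
  have hh : ∑ t ∈ T.filter (fun t => ¬ IsVTile k t),
      (((t.filter (fun c => c.1 = r ∧ c.2 < a)).card : ZMod k)) = ((a - j : ℕ) : ZMod k) := by
    refine Finset.sum_eq_single_of_mem t₀ (Finset.mem_filter.mpr ⟨ht₀T, hnv⟩) ?_ |>.trans ?_
    · intro t ht hne
      rw [Finset.mem_filter] at ht
      obtain ⟨i', j', rfl⟩ := (hT.1 t ht.1).resolve_right ht.2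
      rw [hcard]
      split_ifs with hir
      · rcases le_or_gt a j' with hja' | hja'
        · have : min k (a - j') = 0 := by omega
          rw [this]; simp
        · rcases le_or_gt (j' + k) a with hjk' | hjk'
          · have : min k (a - j') = k := by omega
            rw [this]; simp
          · exfalso
            -- t crosses too, so it contains (r, a-1) which is in t₀ : contradiction
            have hmem : (r, a - 1) ∈ (Finset.range k).image fun s => (i', j' + s) :=
              mem_htile.mpr ⟨a - 1 - j', by omega, by subst hir; simp; omega⟩
            have hd := hT.2.1 ht.1 ht₀T hne
            exact Finset.disjoint_left.mp hd hmem hmem1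
      · simp
    · rw [ht₀, hcard, if_pos rfl]
      congr 1
      omega
  calc ((vcnt k T r a : ℕ) : ZMod k) + ((a - j : ℕ) : ZMod k)
      = ((∑ t ∈ T.filter (fun t => IsVTile k t),
            ((t.filter (fun c => c.1 = r ∧ c.2 < a)).card) : ℕ) : ZMod k)
        + ∑ t ∈ T.filter (fun t => ¬ IsVTile k t),
            (((t.filter (fun c => c.1 = r ∧ c.2 < a)).card : ZMod k)) := by rw [hv, hh]
    _ = (((∑ t ∈ T.filter (fun t => IsVTile k t),
            ((t.filter (fun c => c.1 = r ∧ c.2 < a)).card))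
        + ∑ t ∈ T.filter (fun t => ¬ IsVTile k t),
            ((t.filter (fun c => c.1 = r ∧ c.2 < a)).card) : ℕ) : ZMod k) := by
        push_cast; ring
    _ = (a : ZMod k) := by rw [hsplit]


/-- if all row-counts are congruent to `a`, the line `a` is a fault. -/
lemma build_fault {m n k : ℕ} (hk : 2 ≤ k) {T : Finset (Finset (ℕ × ℕ))}
    (hT : IsTiling m n k T) {a : ℕ} (ha : a ≤ n)
    (h : ∀ r < m, ((vcnt k T r a : ZMod k)) = (a : ZMod k)) : HasFaultAt T a := by
  haveI : NeZero k := ⟨by omega⟩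
  intro t ht
  rcases hT.1 t ht with hH | hV
  · obtain ⟨i, j, rfl⟩ := hH
    rcases le_or_gt (j + k) a with hjk | hjk
    · left
      intro c hc
      obtain ⟨s, hs, rfl⟩ := mem_htile.mp hc
      simp; omega
    · rcases le_or_gt a j with hja | hja
      · right
        intro c hc
        obtain ⟨s, hs, rfl⟩ := mem_htile.mp hc
        simp; omega
      · -- crossing: contradiction
        exfalso
        have him : i < m := by
          have : (i, j + 0) ∈ (Finset.range k).image fun s => (i, j + s) :=
            mem_htile.mpr ⟨0, by omega, rfl⟩
          have := mem_grid.mp (tile_subset_grid hT ht this)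
          exact this.1
        have hX := congX hk hT him ha ht rfl hja hjk
        rw [h i him] at hX
        have h0 : (((a - j : ℕ) : ZMod k)) = 0 := by
          have := add_left_cancel (a := (a : ZMod k)) (b := ((a - j : ℕ) : ZMod k)) (c := 0)
          apply this
          rw [add_zero, hX]
        have hdvd : k ∣ (a - j) := (ZMod.natCast_eq_zero_iff _ _).mp h0
        have := Nat.le_of_dvd (by omega) hdvd
        omega
  · obtain ⟨i, j, rfl⟩ := hV
    rcases le_or_gt a j with hja | hja
    · right
      intro c hc
      obtain ⟨s, hs, rfl⟩ := mem_vtile.mp hc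
      simpa using hja
    · left
      intro c hc
      obtain ⟨s, hs, rfl⟩ := mem_vtile.mp hc
      simpa using hja


lemma vpass {k i j ρ : ℕ} (hk : 0 < k) :
    (∃ c ∈ (Finset.range k).image (fun s => (i + s, j)), c.1 = ρ) ↔ i ≤ ρ ∧ ρ < i + k := by
  constructor
  · rintro ⟨c, hc, hcρ⟩
    obtain ⟨s, hs, rfl⟩ := mem_vtile.mp hc
    simp only [Prod.fst] at hcρ
    omega
  · rintro ⟨h1, h2⟩
    exact ⟨(i + (ρ - i), j), mem_vtile.mpr ⟨ρ - i, by omega, rfl⟩, by simp; omega⟩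

lemma vcol {k i j : ℕ} {a : ℕ} (hk : 0 < k) :
    (∃ c ∈ (Finset.range k).image (fun s => (i + s, j)), c.2 < a) ↔ j < a := by
  constructor
  · rintro ⟨c, hc, hca⟩
    obtain ⟨s, hs, rfl⟩ := mem_vtile.mp hc
    simpa using hca
  · intro h
    exact ⟨(i + 0, j), mem_vtile.mpr ⟨0, by omega, rfl⟩, by simpa using h⟩

/-- a vertical tile of the tiling starts at a row `≤ m - k`. -/
lemma vstart {m n k : ℕ} (hk : 0 < k) {T : Finset (Finset (ℕ × ℕ))} (hT : IsTiling m n k T)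
    {t : Finset (ℕ × ℕ)} (ht : t ∈ T) {i j : ℕ}
    (hv : t = (Finset.range k).image fun s => (i + s, j)) : i + k ≤ m ∧ j < n := by
  have hmem : (i + (k - 1), j) ∈ t := hv ▸ mem_vtile.mpr ⟨k - 1, by omega, rfl⟩
  have := mem_grid.mp (tile_subset_grid hT ht hmem)
  simp at this
  omega

/-- every vertical tile passes through row `k - 1`. -/
lemma vcnt_middle {m n k : ℕ} (hk : 2 ≤ k) (h1 : k < m) (h2 : m < 2 * k)
    {T : Finset (Finset (ℕ × ℕ))} (hT : IsTiling m n k T) (a : ℕ) :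
    vcnt k T (k - 1) a = vall k T a := by
  classical
  rw [vcnt, vall]
  congr 1
  apply Finset.filter_congr
  intro t ht
  constructor
  · rintro ⟨hv, j', hj', hmem⟩
    exact ⟨hv, ⟨(k - 1, j'), hmem, hj'⟩⟩
  · rintro ⟨hv, hc⟩
    obtain ⟨i, j, rfl⟩ := hv
    have hb := vstart (by omega) hT ht rfl
    have hja : j < a := (vcol (by omega)).mp hc
    refine ⟨⟨i, j, rfl⟩, j, hja, mem_vtile.mpr ⟨k - 1 - i, by omega, ?_⟩⟩
    have h3 : i + (k - 1 - i) = k - 1 := by omega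
    rw [h3]

/-- rows `r` and `r + k` together see every vertical tile exactly once. -/
lemma pairing {m n k : ℕ} (hk : 2 ≤ k) (h1 : k < m) (h2 : m < 2 * k)
    {T : Finset (Finset (ℕ × ℕ))} (hT : IsTiling m n k T) {r : ℕ} (hrk : r < k)
    (hrm : r + k < m) (a : ℕ) :
    vcnt k T r a + vcnt k T (r + k) a = vall k T a := by
  classical
  have key : ∀ ρ : ℕ, vcnt k T ρ a =
      ((T.filter (fun t => IsVTile k t ∧ ∃ c ∈ t, c.2 < a)).filter
        (fun t => ∃ c ∈ t, c.1 = ρ)).card := by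
    intro ρ
    rw [vcnt, Finset.filter_filter]
    congr 1
    apply Finset.filter_congr
    intro t ht
    constructor
    · rintro ⟨hv, j', hj', hmem⟩
      exact ⟨⟨hv, ⟨(ρ, j'), hmem, hj'⟩⟩, ⟨(ρ, j'), hmem, rfl⟩⟩
    · rintro ⟨⟨hv, hcol⟩, hrow⟩
      obtain ⟨i, j, rfl⟩ := hv
      have hja : j < a := (vcol (by omega)).mp hcol
      have hρ := (vpass (by omega)).mp hrow
      have h3 : i + (ρ - i) = ρ := by omega
      exact ⟨⟨i, j, rfl⟩, j, hja,
        mem_vtile.mpr ⟨ρ - i, by omega, by rw [h3]⟩⟩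
  rw [key r, key (r + k), vall]
  rw [← Finset.card_filter_add_card_filter_not
    (p := fun t => ∃ c ∈ t, c.1 = r) (s := T.filter (fun t => IsVTile k t ∧ ∃ c ∈ t, c.2 < a))]
  congr 1
  congr 1
  apply Finset.filter_congr
  intro t ht
  rw [Finset.mem_filter] at ht
  obtain ⟨htT, ⟨i, j, rfl⟩, hcol⟩ := ht
  have hb := vstart (by omega) hT htT rfl
  rw [vpass (by omega : 0 < k), vpass (by omega : 0 < k)]
  omega


/-- two vertical tiles in the same column coincide. -/
lemma vert_unique {m n k : ℕ} (hk : 2 ≤ k) (h2 : m < 2 * k) {T : Finset (Finset (ℕ × ℕ))}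
    (hT : IsTiling m n k T) {t t' : Finset (ℕ × ℕ)} (ht : t ∈ T) (ht' : t' ∈ T) {i j i' : ℕ}
    (hv : t = (Finset.range k).image fun s => (i + s, j))
    (hv' : t' = (Finset.range k).image fun s => (i' + s, j)) : t = t' := by
  by_contra hne
  have hd := hT.2.1 ht ht' hne
  have hb := vstart (by omega) hT ht hv
  have hb' := vstart (by omega) hT ht' hv'
  have hmem : (max i i', j) ∈ t := by
    rw [hv]
    refine mem_vtile.mpr ⟨max i i' - i, by omega, ?_⟩
    have h3 : i + (max i i' - i) = max i i' := by omega
    rw [h3]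
  have hmem' : (max i i', j) ∈ t' := by
    rw [hv']
    refine mem_vtile.mpr ⟨max i i' - i', by omega, ?_⟩
    have h3 : i' + (max i i' - i') = max i i' := by omega
    rw [h3]
  exact Finset.disjoint_left.mp hd hmem hmem'

lemma vsup {k i j : ℕ} (hk : 0 < k) :
    (((Finset.range k).image fun s => (i + s, j)).sup (fun c => c.2)) = j := by
  apply le_antisymm
  · apply Finset.sup_le
    intro c hc
    obtain ⟨s, hs, rfl⟩ := mem_vtile.mp hc
    simp
  · exact Finset.le_sup (f := fun c => c.2) (mem_vtile.mpr ⟨0, hk, rfl⟩)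

open Classical in
noncomputable def colset (k n : ℕ) (T : Finset (Finset (ℕ × ℕ))) : Finset ℕ :=
  (Finset.range n).filter (fun j => ∃ t ∈ T, IsVTile k t ∧ ∃ i, (i, j) ∈ t)

/-- counting vertical tiles by their columns. -/
lemma vall_eq_colset {m n k : ℕ} (hk : 2 ≤ k) (h2 : m < 2 * k)
    {T : Finset (Finset (ℕ × ℕ))} (hT : IsTiling m n k T) {a : ℕ} (ha : a ≤ n) :
    vall k T a = ((colset k n T).filter (· < a)).card := by
  classical
  rw [vall]
  apply Finset.card_bij (fun t _ => t.sup (fun c => c.2))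
  · intro t ht
    rw [Finset.mem_filter] at ht
    obtain ⟨htT, ⟨i, j, hv⟩, hcol⟩ := ht
    have hja : j < a := (vcol (by omega : 0 < k)).mp (hv ▸ hcol)
    have hb := vstart (by omega : 0 < k) hT htT hv
    rw [hv, vsup (by omega : 0 < k)]
    rw [Finset.mem_filter]
    refine ⟨Finset.mem_filter.mpr ⟨Finset.mem_range.mpr hb.2, t, htT, ⟨i, j, hv⟩, i, ?_⟩, hja⟩
    · rw [hv]; exact mem_vtile.mpr ⟨0, by omega, by simp⟩
  · intro t ht t' ht' heq
    rw [Finset.mem_filter] at ht ht'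
    obtain ⟨htT, ⟨i, j, hv⟩, -⟩ := ht
    obtain ⟨htT', ⟨i', j', hv'⟩, -⟩ := ht'
    rw [hv, hv', vsup (by omega : 0 < k), vsup (by omega : 0 < k)] at heq
    subst heq
    exact vert_unique hk h2 hT htT htT' hv hv'
  · intro j hj
    rw [Finset.mem_filter] at hj
    obtain ⟨hj1, hja⟩ := hj
    rw [colset, Finset.mem_filter] at hj1
    obtain ⟨-, t, htT, hv, i, hmem⟩ := hj1
    obtain ⟨i₀, j₀, hv0⟩ := hv
    have : j₀ = j := by
      have := mem_vtile.mp (hv0 ▸ hmem)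
      obtain ⟨s, -, hc⟩ := this
      exact (congrArg Prod.snd hc).symm
    subst this
    refine ⟨t, Finset.mem_filter.mpr ⟨htT, ⟨i₀, j₀, hv0⟩, ⟨(i, j₀), hmem, hja⟩⟩, ?_⟩
    rw [hv0, vsup (by omega : 0 < k)]

/-- a finite set of naturals with more than `k` elements has an element with
exactly `k` smaller elements. -/
lemma exists_kth (s : Finset ℕ) (k : ℕ) (h : k < s.card) :
    ∃ c ∈ s, (s.filter (· < c)).card = k := by
  classical
  have hex : ∃ a, k + 1 ≤ (s.filter (· < a)).card := by
    refine ⟨s.sup id + 1, ?_⟩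
    have he : s.filter (· < s.sup id + 1) = s := by
      apply Finset.filter_true_of_mem
      intro x hx
      have := Finset.le_sup (f := id) hx
      simpa using Nat.lt_succ_of_le this
    rw [he]; omega
  have hspec := Nat.find_spec hex
  set a₀ := Nat.find hex with ha₀def
  have ha₀pos : 0 < a₀ := by
    rcases Nat.eq_zero_or_pos a₀ with h0 | h0
    · exfalso
      rw [h0] at hspec
      have : s.filter (· < 0) = ∅ := by
        apply Finset.filter_false_of_mem; intro x hx; omega
      rw [this] at hspec; simp at hspec
    · exact h0
  have hmin : ¬ (k + 1 ≤ (s.filter (· < a₀ - 1)).card) :=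
    Nat.find_min hex (show a₀ - 1 < a₀ by omega)
  have hsub : s.filter (· < a₀) ⊆ insert (a₀ - 1) (s.filter (· < a₀ - 1)) := by
    intro x hx
    rw [Finset.mem_filter] at hx
    rcases eq_or_ne x (a₀ - 1) with he | hne
    · exact Finset.mem_insert.mpr (Or.inl he)
    · exact Finset.mem_insert.mpr (Or.inr (Finset.mem_filter.mpr ⟨hx.1, by omega⟩))
  have hcard1 : (s.filter (· < a₀)).card ≤ (s.filter (· < a₀ - 1)).card + 1 :=
    le_trans (Finset.card_le_card hsub) (Finset.card_insert_le _ _)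
  have hk' : (s.filter (· < a₀ - 1)).card = k := by omega
  have hc_mem : a₀ - 1 ∈ s := by
    by_contra hmem
    have he : s.filter (· < a₀) = s.filter (· < a₀ - 1) := by
      apply Finset.filter_congr
      intro x hx
      have hne : x ≠ a₀ - 1 := by rintro rfl; exact hmem hx
      constructor <;> (intro; omega)
    rw [he] at hspec; omega
  exact ⟨a₀ - 1, hc_mem, hk'⟩


lemma vcnt_le_vall {k : ℕ} {T : Finset (Finset (ℕ × ℕ))} {r a : ℕ} :
    vcnt k T r a ≤ vall k T a := by
  classical
  apply Finset.card_le_card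
  intro t ht
  rw [Finset.mem_filter] at ht ⊢
  obtain ⟨htT, hv, j, hj, hmem⟩ := ht
  exact ⟨htT, hv, (r, j), hmem, hj⟩

lemma vcnt_mono {k : ℕ} {T : Finset (Finset (ℕ × ℕ))} {r a a' : ℕ} (h : a ≤ a') :
    vcnt k T r a ≤ vcnt k T r a' := by
  classical
  apply Finset.card_le_card
  intro t ht
  rw [Finset.mem_filter] at ht ⊢
  obtain ⟨htT, hv, j, hj, hmem⟩ := ht
  exact ⟨htT, hv, j, by omega, hmem⟩

end FF

theorem stmt_10 (k m l : ℕ) (hk : 2 ≤ k) (h1 : k < m) (h2 : m < 2 * k) (hl : 1 < l)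
    (T : Finset (Finset (ℕ × ℕ))) (hT : IsTiling m (k * l) k T)
    (hff : FaultFree (k * l) T) :
    {t : Finset (ℕ × ℕ) | t ∈ T ∧ IsVTile k t}.ncard = k := by
  classical
  open FF in
  haveI : NeZero k := ⟨by omega⟩
  have hn2k : 2 * k ≤ k * l := by
    have : k * 2 ≤ k * l := Nat.mul_le_mul le_rfl hl
    omega
  -- congruence at a = k*l for every row
  have hA : ∀ r < m, ((FF.vcnt k T r (k * l) : ZMod k)) = 0 := by
    intro r hr
    have hcross : ∀ t ∈ T, ¬((r, k * l - 1) ∈ t ∧ (r, k * l) ∈ t) := by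
      rintro t ht ⟨-, hmem⟩
      have := FF.mem_grid.mp (FF.tile_subset_grid hT ht hmem)
      omega
    have hc := FF.cong hk hT hr le_rfl hcross
    rw [hc]
    push_cast
    simp [ZMod.natCast_self]
  have hmid : k - 1 < m := by omega
  have hdvd : k ∣ FF.vall k T (k * l) := by
    have h0 := hA (k - 1) hmid
    rw [FF.vcnt_middle hk h1 h2 hT] at h0
    exact (ZMod.natCast_eq_zero_iff _ _).mp h0
  -- vall ≠ 0
  have hne0 : FF.vall k T (k * l) ≠ 0 := by
    intro h0
    apply hff k (by omega) (by omega)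
    apply FF.build_fault hk hT (show (k : ℕ) ≤ k * l by omega)
    intro r hr
    have hz : FF.vcnt k T r k = 0 := by
      have h5 : FF.vcnt k T r k ≤ FF.vcnt k T r (k * l) :=
        FF.vcnt_mono (show (k:ℕ) ≤ k * l by omega)
      have h6 : FF.vcnt k T r (k * l) ≤ FF.vall k T (k * l) := FF.vcnt_le_vall
      omega
    rw [hz]
    simp [ZMod.natCast_self]
  -- vall ≤ k
  have hle : FF.vall k T (k * l) ≤ k := by
    by_contra hgt
    push_neg at hgt
    have hcs : (FF.colset k (k * l) T).filter (· < k * l) = FF.colset k (k * l) T := by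
      apply Finset.filter_true_of_mem
      intro x hx
      rw [FF.colset, Finset.mem_filter] at hx
      exact Finset.mem_range.mp hx.1
    have hcseq : FF.vall k T (k * l) = (FF.colset k (k * l) T).card := by
      rw [FF.vall_eq_colset hk h2 hT le_rfl, hcs]
    obtain ⟨c, hc_mem, hc_k⟩ := FF.exists_kth (FF.colset k (k * l) T) k (by omega)
    have hc_mem' := hc_mem
    rw [FF.colset, Finset.mem_filter] at hc_mem'
    obtain ⟨hcrange, tstar, htsT, hvs, i₁, hmem₁⟩ := hc_mem'
    have hcn : c < k * l := Finset.mem_range.mp hcrange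
    obtain ⟨i₀, j₀, hv0⟩ := hvs
    have hj₀ : c = j₀ := by
      obtain ⟨s, -, hc'⟩ := FF.mem_vtile.mp (hv0 ▸ hmem₁)
      exact congrArg Prod.snd hc'
    subst hj₀
    have hb0 := FF.vstart (by omega : 0 < k) hT htsT hv0
    have hvallc : FF.vall k T c = k := by
      rw [FF.vall_eq_colset hk h2 hT (le_of_lt hcn), hc_k]
    have hcpos : 0 < c := by
      have hne : ((FF.colset k (k * l) T).filter (· < c)).Nonempty := by
        apply Finset.card_pos.mp; omega
      obtain ⟨x, hx⟩ := hne
      have := (Finset.mem_filter.mp hx).2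
      omega
    have hc1 : ∀ r, i₀ ≤ r → r < i₀ + k → ((FF.vcnt k T r c : ZMod k)) = (c : ZMod k) := by
      intro r hr1 hr2
      have hrm : r < m := by omega
      apply FF.cong hk hT hrm (le_of_lt hcn)
      rintro t ht ⟨hm1, hm2⟩
      have hmemstar : (r, c) ∈ tstar := by
        rw [hv0]
        refine FF.mem_vtile.mpr ⟨r - i₀, by omega, ?_⟩
        have h3 : i₀ + (r - i₀) = r := by omega
        rw [h3]
      have hteq : t = tstar := by
        by_contra hne
        exact Finset.disjoint_left.mp (hT.2.1 ht htsT hne) hm2 hmemstar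
      subst hteq
      obtain ⟨s, -, hc'⟩ := FF.mem_vtile.mp (hv0 ▸ hm1)
      have := congrArg Prod.snd hc'
      simp at this
      omega
    have hc0 : (c : ZMod k) = 0 := by
      have h := hc1 (k - 1) (by omega) (by omega)
      rw [FF.vcnt_middle hk h1 h2 hT, hvallc] at h
      rw [← h]
      simp [ZMod.natCast_self]
    have hall : ∀ r < m, ((FF.vcnt k T r c : ZMod k)) = (c : ZMod k) := by
      intro r hrm
      rcases lt_or_ge r i₀ with hcase | hcase
      · have hp := FF.pairing hk h1 h2 hT (show r < k by omega) (show r + k < m by omega) c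
        have hq := hc1 (r + k) (by omega) (by omega)
        have hpz := congrArg (Nat.cast : ℕ → ZMod k) hp
        push_cast at hpz
        rw [hq, hc0, hvallc] at hpz
        rw [hc0]
        simpa [ZMod.natCast_self] using hpz
      · rcases lt_or_ge r (i₀ + k) with hcase2 | hcase2
        · exact hc1 r hcase hcase2
        · have hp := FF.pairing hk h1 h2 hT (show r - k < k by omega)
            (show (r - k) + k < m by omega) c
          have hrk : r - k + k = r := by omega
          rw [hrk] at hp
          have hq := hc1 (r - k) (by omega) (by omega)
          have hpz := congrArg (Nat.cast : ℕ → ZMod k) hp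
          push_cast at hpz
          rw [hq, hc0, hvallc] at hpz
          rw [hc0]
          simpa [ZMod.natCast_self] using hpz
    exact hff c hcpos hcn (FF.build_fault hk hT (le_of_lt hcn) hall)
  have hvk : FF.vall k T (k * l) = k := by
    have := Nat.le_of_dvd (by omega) hdvd
    omega
  have hset : {t : Finset (ℕ × ℕ) | t ∈ T ∧ IsVTile k t}
      = ↑(T.filter (fun t => IsVTile k t)) := by
    ext t
    simp [Finset.mem_filter]
  have hcard : (T.filter (fun t => IsVTile k t)).card = FF.vall k T (k * l) := by
    rw [FF.vall]
    congr 1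
    apply Finset.filter_congr
    intro t ht
    constructor
    · rintro hv
      obtain ⟨i, j, hv0⟩ := hv
      have hb := FF.vstart (by omega : 0 < k) hT ht hv0
      refine ⟨⟨i, j, hv0⟩, (i + 0, j), ?_, by simpa using hb.2⟩
      rw [hv0]
      exact FF.mem_vtile.mpr ⟨0, by omega, rfl⟩
    · exact fun h => h.1
  rw [hset, Set.ncard_coe_finset, hcard, hvk]
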